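/- Let p be a prime with p ≡ 1 (mod 3). Then U_p = Q^{p(p-1)/3} A Q^{-(p-1)/3} A^{-p}, where A = [[1,0],[1,1]], Q = [[1,3/p],[0,1]], U_p = [[p,0],[0,1/p]]. In particular U_p lies in the subgroup of SL_2(Z[1/p]) generated by A and Q. -/

import Mathlib

abbrev SL2Q := Matrix.SpecialLinearGroup (Fin 2) ℚ

/-- A = [[1,0],[1,1]] -/
def matA : SL2Q := ⟨!![1,0;1,1], by norm_num [Matrix.det_fin_two_of]⟩
/-- B = [[0,1],[-1,0]] -/
def matB : SL2Q := ⟨!![0,1;-1,0], by norm_num [Matrix.det_fin_two_of]⟩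
/-- Q_q = [[1,q],[0,1]] -/
def matQ (q : ℚ) : SL2Q := ⟨!![1,q;0,1], by norm_num [Matrix.det_fin_two_of]⟩
/-- U_p = [[p,0],[0,1/p]] -/
def matU (p : ℚ) (hp : p ≠ 0) : SL2Q := ⟨!![p,0;0,p⁻¹], by rw [Matrix.det_fin_two_of]; field_simp; ring⟩
/-- lower unipotent [[1,0],[x,1]] -/
def matL (x : ℚ) : SL2Q := ⟨!![1,0;x,1], by norm_num [Matrix.det_fin_two_of]⟩

lemma matQ_mul (a b : ℚ) : matQ a * matQ b = matQ (a + b) := by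
  apply Subtype.ext
  simp only [Matrix.SpecialLinearGroup.coe_mul]
  simp [matQ, Matrix.mul_fin_two]
  ring_nf

lemma matQ_zero : matQ 0 = 1 := by
  apply Subtype.ext
  simp [matQ]
  exact (Matrix.one_fin_two).symm

lemma matQ_pow (q : ℚ) (n : ℕ) : (matQ q)^n = matQ (n * q) := by
  induction n with
  | zero => simpa using matQ_zero.symm
  | succ n ih => rw [pow_succ, ih, matQ_mul]; push_cast; ring_nf

lemma matQ_zpow (q : ℚ) (n : ℤ) : (matQ q)^n = matQ (n * q) := by
  induction n using Int.rec with
  | ofNat n => simpa using matQ_pow q n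
  | negSucc n =>
    rw [zpow_negSucc, matQ_pow]
    rw [eq_comm, eq_inv_iff_mul_eq_one, matQ_mul]
    push_cast
    ring_nf
    exact matQ_zero

lemma matL_mul (a b : ℚ) : matL a * matL b = matL (a + b) := by
  apply Subtype.ext
  simp only [Matrix.SpecialLinearGroup.coe_mul]
  simp [matL, Matrix.mul_fin_two]

lemma matL_zero : matL 0 = 1 := by
  apply Subtype.ext
  simp [matL]
  exact (Matrix.one_fin_two).symm

lemma matL_pow (n : ℕ) : matA^n = matL n := by
  induction n with
  | zero => simpa using matL_zero.symm
  | succ n ih =>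
    have : matA = matL 1 := by apply Subtype.ext; simp [matA, matL]
    rw [pow_succ, ih, this, matL_mul]; push_cast; ring_nf

lemma matL_zpow (n : ℤ) : matA^n = matL n := by
  induction n using Int.rec with
  | ofNat n => simpa using matL_pow n
  | negSucc n =>
    rw [zpow_negSucc, matL_pow]
    rw [eq_comm, eq_inv_iff_mul_eq_one, matL_mul]
    push_cast
    ring_nf
    exact matL_zero

theorem stmt5 (p : ℕ) (hp : p.Prime) (h1 : p % 3 = 1) :
    matU p (Nat.cast_ne_zero.mpr hp.ne_zero) =
      (matQ (3/p))^((p:ℤ)*((p:ℤ)-1)/3) * matA * (matQ (3/p))^(-(((p:ℤ)-1)/3)) * matA^(-(p:ℤ)) ∧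
    matU p (Nat.cast_ne_zero.mpr hp.ne_zero) ∈ Subgroup.closure {matA, matQ (3/p)} := by
  have hp0 : (p:ℚ) ≠ 0 := Nat.cast_ne_zero.mpr hp.ne_zero
  have h3 : (3:ℤ) ∣ (p:ℤ) - 1 := by omega
  obtain ⟨k, hk⟩ := h3
  have hmain : matU p (Nat.cast_ne_zero.mpr hp.ne_zero) =
      (matQ (3/p))^((p:ℤ)*((p:ℤ)-1)/3) * matA * (matQ (3/p))^(-(((p:ℤ)-1)/3)) * matA^(-(p:ℤ)) := by
    have e1 : (p:ℤ)*((p:ℤ)-1)/3 = (p:ℤ)*k := by rw [hk]; ring_nf; omega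
    have e2 : ((p:ℤ)-1)/3 = k := by omega
    rw [e1, e2, matQ_zpow, matQ_zpow, matL_zpow]
    have hkq : (k:ℚ) * 3 = (p:ℚ) - 1 := by
      have : ((p:ℚ) - 1) = 3 * (k:ℚ) := by exact_mod_cast hk
      linarith
    apply Subtype.ext
    simp only [Matrix.SpecialLinearGroup.coe_mul]
    simp [matU, matQ, matA, matL, Matrix.mul_fin_two]
    have hk' : (k:ℚ) = (↑p - 1)/3 := by linarith
    rw [hk']
    refine ⟨⟨?_, ?_⟩, ?_, ?_⟩ <;> field_simp <;> ring
  refine ⟨hmain, ?_⟩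
  rw [hmain]
  have hA : matA ∈ Subgroup.closure {matA, matQ (3/p)} :=
    Subgroup.subset_closure (by simp)
  have hQ : matQ (3/p) ∈ Subgroup.closure {matA, matQ (3/p)} :=
    Subgroup.subset_closure (by simp)
  exact mul_mem (mul_mem (mul_mem (zpow_mem hQ _) hA) (zpow_mem hQ _)) (zpow_mem hA _)
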